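/- arXiv:1906.04912 — 2 statements merged into one kernel-verified Lean document; each statement's English description precedes it below -/
import Mathlib

section
/- For integers n ≥ 1 and k with k ≠ 0 and k ≠ 2n, and for real t ∈ [0,ρ] with 0 < ρ, any complex number λ satisfying |λ - (2πn + t)²| ≤ 15πnρ (with 15πρ < 1) satisfies |λ - (2π(n-k) + t)²| > |k|·|2n - k|. -/
open Real

set_option maxHeartbeats 1000000 in
theorem stmt_0 (n : ℕ) (hn : 1 ≤ n) (k : ℤ) (hk0 : k ≠ 0) (hk2n : k ≠ 2 * n)
    (ρ t : ℝ) (hρ : 0 < ρ) (hρ' : 15 * π * ρ < 1) (ht0 : 0 ≤ t) (htρ : t ≤ ρ)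
    (lam : ℂ) (hlam : ‖lam - ((2 * π * n + t : ℝ) : ℂ) ^ 2‖ ≤ 15 * π * n * ρ) :
    ‖lam - ((2 * π * ((n : ℝ) - (k : ℝ)) + t : ℝ) : ℂ) ^ 2‖
      > |(k : ℝ)| * |2 * (n : ℝ) - (k : ℝ)| := by
  have hπ := Real.pi_gt_d6
  have ha : (1:ℝ) ≤ |(k:ℝ)| := by
    rw [← Int.cast_abs]
    exact_mod_cast Int.one_le_abs hk0
  have hbz : (2 * (n:ℤ) - k) ≠ 0 := by omega
  have hb : (1:ℝ) ≤ |2 * (n:ℝ) - (k:ℝ)| := by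
    have h1 := Int.one_le_abs hbz
    have : (2 * (n:ℝ) - (k:ℝ)) = ((2 * (n:ℤ) - k : ℤ) : ℝ) := by push_cast; ring
    rw [this, ← Int.cast_abs]
    exact_mod_cast h1
  have h2n : 2 * (n:ℝ) ≤ |(k:ℝ)| + |2 * (n:ℝ) - (k:ℝ)| := by
    have := abs_add_le (k:ℝ) (2 * (n:ℝ) - (k:ℝ))
    have h0 : (0:ℝ) ≤ 2 * (n:ℝ) := by positivity
    calc 2 * (n:ℝ) = |(k:ℝ) + (2 * (n:ℝ) - (k:ℝ))| := by rw [abs_of_nonneg]; ring; linarith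
      _ ≤ _ := this
  set A : ℝ := 2 * π * n + t with hA
  set B : ℝ := 2 * π * ((n:ℝ) - (k:ℝ)) + t with hB
  have hcast : ((A:ℂ))^2 - ((B:ℂ))^2 = ((((2*π*(k:ℝ)) * (2*π*(2*(n:ℝ)-(k:ℝ)) + 2*t)) : ℝ) : ℂ) := by
    rw [hA, hB]; push_cast; ring
  have htri : ‖(A:ℂ)^2 - (B:ℂ)^2‖
      ≤ ‖lam - (B:ℂ)^2‖ + ‖lam - (A:ℂ)^2‖ := by
    have : (A:ℂ)^2 - (B:ℂ)^2 = (lam - (B:ℂ)^2) - (lam - (A:ℂ)^2) := by ring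
    rw [this]
    exact norm_sub_le _ _
  have habs : ‖(A:ℂ)^2 - (B:ℂ)^2‖
      = |(2*π*(k:ℝ)) * (2*π*(2*(n:ℝ)-(k:ℝ)) + 2*t)| := by
    rw [hcast, Complex.norm_real, Real.norm_eq_abs]
  have hπpos : (0:ℝ) < π := Real.pi_pos
  have hmul : |(2*π*(k:ℝ)) * (2*π*(2*(n:ℝ)-(k:ℝ)) + 2*t)|
      = (2*π*|(k:ℝ)|) * |2*π*(2*(n:ℝ)-(k:ℝ)) + 2*t| := by
    rw [abs_mul, abs_mul, abs_mul, abs_of_nonneg (by norm_num : (0:ℝ) ≤ 2),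
      abs_of_nonneg hπpos.le]
  have hc : 2*π*|2*(n:ℝ)-(k:ℝ)| - 2*t ≤ |2*π*(2*(n:ℝ)-(k:ℝ)) + 2*t| := by
    have h1 : |2*π*(2*(n:ℝ)-(k:ℝ))| - |2*t| ≤ |2*π*(2*(n:ℝ)-(k:ℝ)) + 2*t| := by
      have := abs_add_le (2*π*(2*(n:ℝ)-(k:ℝ)) + 2*t) (-(2*t))
      simp at this
      calc |2*π*(2*(n:ℝ)-(k:ℝ))| - |2*t|
          = |(2*π*(2*(n:ℝ)-(k:ℝ)) + 2*t) + (-(2*t))| - |2*t| := by ring_nf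
        _ ≤ _ := by
            have := abs_sub_abs_le_abs_sub (2*π*(2*(n:ℝ)-(k:ℝ))) (-(2*t))
            have h2 : 2*π*(2*(n:ℝ)-(k:ℝ)) - (-(2*t)) = 2*π*(2*(n:ℝ)-(k:ℝ)) + 2*t := by ring
            rw [h2] at this
            simpa [abs_neg] using this
    have h2 : |2*π*(2*(n:ℝ)-(k:ℝ))| = 2*π*|2*(n:ℝ)-(k:ℝ)| := by
      rw [abs_mul, abs_mul, abs_of_nonneg (by norm_num : (0:ℝ) ≤ 2), abs_of_nonneg hπpos.le]
    have h3 : |2*t| = 2*t := abs_of_nonneg (by linarith)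
    linarith
  set a := |(k:ℝ)|
  set b := |2*(n:ℝ)-(k:ℝ)|
  have hnab : (n:ℝ) ≤ (a + b) / 2 := by linarith
  have hlow : (2*π*a) * (2*π*b - 2*t) - 15*π*(n:ℝ)*ρ ≤ ‖lam - (B:ℂ)^2‖ := by
    have h4 : (2*π*a) * (2*π*b - 2*t) ≤ (2*π*a) * |2*π*(2*(n:ℝ)-(k:ℝ)) + 2*t| := by
      apply mul_le_mul_of_nonneg_left hc (by positivity)
    nlinarith [htri, hlam, habs, hmul]
  have hρb : ρ < 1 / (15*π) := by
    rw [lt_div_iff₀ (by positivity)]; linarith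
  -- final numeric inequality
  have hfin : a * b < (2*π*a) * (2*π*b - 2*t) - 15*π*(n:ℝ)*ρ := by
    have ht2 : 2*π*a*(2*t) ≤ 4*π*a*ρ := by
      nlinarith [mul_le_mul_of_nonneg_left htρ (show (0:ℝ) ≤ 4*π*a by positivity)]
    have h15 : 15*π*(n:ℝ)*ρ < (a+b)/2 := by
      nlinarith [mul_pos hπpos hρ]
    have h4a : 4*π*a*ρ < 4*a/15 := by nlinarith
    have hab0 : (1:ℝ) ≤ a*b := by
      have := mul_le_mul ha hb zero_le_one (by linarith : (0:ℝ) ≤ a)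
      linarith
    have hπ2 : (9:ℝ) < π*π := by nlinarith [hπ]
    have h36 : 36*(a*b) ≤ 4*(π*π)*(a*b) := by nlinarith [hπ2, hab0]
    have haab : a ≤ a*b := by nlinarith [ha, hb]
    have hbab : b ≤ a*b := by nlinarith [ha, hb]
    nlinarith [ht2, h15, h4a, h36, haab, hbab]
  linarith [hlow, hfin]
end

section
/- Let z, w be complex numbers with -π + δ < arg(w) < π - δ for some δ > 0 and |arg(z)| < δ/2, where z ≠ 0 or w ≠ 0 and z has nonnegative real part (arg z ∈ (-δ/2, δ/2)). Then z + w ≠ 0 and -π < arg(z + w) < π. -/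
open Real

theorem stmt_11 (δ : ℝ) (hδ : 0 < δ) (hδ' : δ < π / 2)
    (z w : ℂ) (hz : z ≠ 0) (hw : w ≠ 0)
    (hw1 : -π + δ < w.arg) (hw2 : w.arg < π - δ)
    (hzarg : |z.arg| < δ / 2) :
    z + w ≠ 0 ∧ -π < (z + w).arg ∧ (z + w).arg < π := by
  have hpi := Real.pi_pos
  have hre : 0 < z.re := by
    have : |z.arg| < π / 2 := by linarith [abs_nonneg z.arg]
    rcases Complex.abs_arg_lt_pi_div_two_iff.mp this with h | h
    · exact h
    · exact absurd h hz
  have key : ¬((z + w).re ≤ 0 ∧ (z + w).im = 0) := by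
    rintro ⟨ht, him⟩
    set t : ℝ := (z + w).re with htdef
    have hwre : w.re = t - z.re := by simp [htdef, Complex.add_re]
    have hwim : w.im = -z.im := by
      have : z.im + w.im = 0 := by simpa [Complex.add_im] using him
      linarith
    -- u = -w has positive real part and im = z.im
    have hure : (-w).re = z.re - t := by simp [hwre]
    have huim : (-w).im = z.im := by simp [hwim]
    have hurepos : 0 < (-w).re := by rw [hure]; linarith
    have habs : ‖z‖ ≤ ‖-w‖ := by
      rw [Complex.norm_def, Complex.norm_def]
      apply Real.sqrt_le_sqrt
      simp only [Complex.normSq_apply, hure, huim]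
      nlinarith
    have habsz : 0 < ‖z‖ := norm_pos_iff.mpr hz
    have habsu : 0 < ‖-w‖ := by
      apply norm_pos_iff.mpr; simpa using hw
    have hargu : (-w).arg = Real.arcsin (z.im / ‖-w‖) := by
      rw [Complex.arg_of_re_nonneg hurepos.le, huim]
    have hargz : z.arg = Real.arcsin (z.im / ‖z‖) := by
      rw [Complex.arg_of_re_nonneg hre.le]
    have habsarg := abs_lt.mp hzarg
    rcases lt_trichotomy z.im 0 with him0 | him0 | him0
    ·
      have h1 : w.arg = (-w).arg + π := by
        have := Complex.arg_neg_eq_arg_add_pi_of_im_neg (x := -w) (by rw [huim]; exact him0)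
        simpa using this
      have h2 : z.im / ‖z‖ ≤ z.im / ‖-w‖ := by
        rw [div_le_div_iff₀ habsz habsu]
        nlinarith
      have h3 : z.arg ≤ (-w).arg := by
        rw [hargu, hargz]; exact Real.monotone_arcsin h2
      rw [h1] at hw2; linarith
    · have : w.arg = π := by
        rw [Complex.arg_eq_pi_iff]
        constructor
        · rw [hwre]; linarith
        · rw [hwim, him0, neg_zero]
      linarith
    · have h1 : w.arg = (-w).arg - π := by
        have := Complex.arg_neg_eq_arg_sub_pi_of_im_pos (x := -w) (by rw [huim]; exact him0)
        simpa using this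
      have h2 : z.im / ‖-w‖ ≤ z.im / ‖z‖ := by
        rw [div_le_div_iff₀ habsu habsz]
        nlinarith
      have h3 : (-w).arg ≤ z.arg := by
        rw [hargu, hargz]; exact Real.monotone_arcsin h2
      rw [h1] at hw1; linarith
  have hne : z + w ≠ 0 := by
    intro h
    exact key ⟨by simp [h], by simp [h]⟩
  refine ⟨hne, Complex.neg_pi_lt_arg _, ?_⟩
  rcases lt_or_eq_of_le (Complex.arg_le_pi (z + w)) with h | h
  · exact h
  · exact absurd (Complex.arg_eq_pi_iff.mp h) (fun ⟨a, b⟩ => key ⟨a.le, b⟩)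
end
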